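/- The state transition matrix of the LTV system ẋ = A(t) x, with A(t) the 12×12 block matrix having -[ω(t)]_× on each of the four diagonal 3×3 blocks, I₃ on the (1,2) and (2,3) blocks and zeros elsewhere, is φ(t,s) = T(t)ᵀ exp(Ā(t-s)) T(s), where T(t) = blkdiag(R(t),R(t),R(t),R(t)) with Ṙ = R[ω]_× and Ā as the constant matrix with I₃ on the (1,2) and (2,3) blocks only. That is, φ satisfies d/dt φ(t,s) = A(t)φ(t,s) and φ(s,s) = I₁₂. -/

import Mathlib

open Matrix

attribute [local instance] Matrix.normedAddCommGroup Matrix.normedSpace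

/-- The skew-symmetric matrix `[ω]×` of the cross product. -/
def skewMat (ω : Fin 3 → ℝ) : Matrix (Fin 3) (Fin 3) ℝ :=
  !![0, -ω 2, ω 1; ω 2, 0, -ω 0; -ω 1, ω 0, 0]

/-- `blkdiag(M, M, M, M)`. -/
def blkDiag4 (M : Matrix (Fin 3) (Fin 3) ℝ) :
    Matrix (Fin 4 × Fin 3) (Fin 4 × Fin 3) ℝ :=
  Matrix.of fun p q => if p.1 = q.1 then M p.2 q.2 else 0

/-- The constant matrix `Ā` with `I₃` on the (1,2) and (2,3) blocks only. -/
def Abar : Matrix (Fin 4 × Fin 3) (Fin 4 × Fin 3) ℝ :=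
  Matrix.of fun p q =>
    if ((p.1 = 0 ∧ q.1 = 1) ∨ (p.1 = 1 ∧ q.1 = 2)) ∧ p.2 = q.2 then 1 else 0

lemma blkDiag4_mul (A B : Matrix (Fin 3) (Fin 3) ℝ) :
    blkDiag4 A * blkDiag4 B = blkDiag4 (A * B) := by
  ext ⟨i, a⟩ ⟨j, b⟩
  simp [blkDiag4, Matrix.mul_apply, Fintype.sum_prod_type, Fin.sum_univ_four]

lemma blkDiag4_transpose (A : Matrix (Fin 3) (Fin 3) ℝ) :
    (blkDiag4 A)ᵀ = blkDiag4 Aᵀ := by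
  ext ⟨i, a⟩ ⟨j, b⟩
  simp [blkDiag4, Matrix.transpose_apply, eq_comm]

lemma blkDiag4_one : blkDiag4 1 = 1 := by
  ext ⟨i, a⟩ ⟨j, b⟩
  simp [blkDiag4, Matrix.one_apply, Prod.ext_iff, ite_and]

lemma blkDiag4_add (A B : Matrix (Fin 3) (Fin 3) ℝ) :
    blkDiag4 (A + B) = blkDiag4 A + blkDiag4 B := by
  ext ⟨i, a⟩ ⟨j, b⟩
  simp [blkDiag4]
  split <;> simp

lemma blkDiag4_smul (c : ℝ) (A : Matrix (Fin 3) (Fin 3) ℝ) :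
    blkDiag4 (c • A) = c • blkDiag4 A := by
  ext ⟨i, a⟩ ⟨j, b⟩
  simp [blkDiag4]

lemma blkDiag4_neg (A : Matrix (Fin 3) (Fin 3) ℝ) :
    blkDiag4 (-A) = -blkDiag4 A := by
  ext ⟨i, a⟩ ⟨j, b⟩
  simp [blkDiag4]
  split <;> simp

lemma Abar_comm (M : Matrix (Fin 3) (Fin 3) ℝ) :
    Abar * blkDiag4 M = blkDiag4 M * Abar := by
  ext ⟨i, a⟩ ⟨j, b⟩
  simp [blkDiag4, Abar, Matrix.mul_apply, Fintype.sum_prod_type, Fin.sum_univ_four]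
  fin_cases i <;> fin_cases j <;> simp [Fin.sum_univ_three]

lemma Abar_cube : Abar * (Abar * Abar) = 0 := by
  ext ⟨i, a⟩ ⟨j, b⟩
  simp [Abar, Matrix.mul_apply, Fintype.sum_prod_type, Fin.sum_univ_four, Fin.sum_univ_three]

lemma pow_zero_of_ge {n : ℕ} (hn : 3 ≤ n) : Abar ^ n = 0 := by
  obtain ⟨k, rfl⟩ := Nat.exists_eq_add_of_le hn
  rw [pow_add]
  have h3 : Abar ^ 3 = 0 := by
    rw [pow_succ, pow_two, mul_assoc, Abar_cube]  -- maybe wrong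
  rw [h3, zero_mul]

lemma exp_smul_Abar (u : ℝ) :
    NormedSpace.exp (u • Abar) = 1 + u • Abar + (u ^ 2 / 2) • (Abar * Abar) := by
  rw [NormedSpace.exp_eq_tsum (𝕂 := ℝ)]
  show (∑' n : ℕ, ((n.factorial : ℝ))⁻¹ • (u • Abar) ^ n) = _
  rw [tsum_eq_sum (s := Finset.range 3) (fun n hn => ?_)]
  · simp [Finset.sum_range_succ, smul_pow, smul_smul, pow_two]
    ring_nf
  · rw [smul_pow, pow_zero_of_ge (by simpa using hn), smul_zero, smul_zero]

abbrev M12 := Matrix (Fin 4 × Fin 3) (Fin 4 × Fin 3) ℝ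

noncomputable def mulCLM : M12 →L[ℝ] M12 →L[ℝ] M12 :=
  LinearMap.toContinuousLinearMap
    ((LinearMap.toContinuousLinearMap.toLinearMap :
        (M12 →ₗ[ℝ] M12) →ₗ[ℝ] (M12 →L[ℝ] M12)) ∘ₗ (LinearMap.mul ℝ M12))

@[simp] lemma mulCLM_apply (A B : M12) : mulCLM A B = A * B := rfl

lemma hasDerivAt_matmul {f g : ℝ → M12} {f' g' : M12} {t : ℝ}
    (hf : HasDerivAt f f' t) (hg : HasDerivAt g g' t) :
    HasDerivAt (fun τ => f τ * g τ) (f' * g t + f t * g') t := by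
  have := mulCLM.hasDerivAt_of_bilinear (fun _ => hf) (fun _ => hg)
  rw [add_comm]
  exact this

noncomputable def TtCLM : Matrix (Fin 3) (Fin 3) ℝ →L[ℝ] M12 :=
  LinearMap.toContinuousLinearMap
    { toFun := fun M => blkDiag4 Mᵀ
      map_add' := by intro A B; beta_reduce; rw [Matrix.transpose_add, blkDiag4_add]
      map_smul' := by intro c A; simp [Matrix.transpose_smul, blkDiag4_smul] }

lemma hasDerivAt_Tt {R : ℝ → Matrix (Fin 3) (Fin 3) ℝ} {R' : Matrix (Fin 3) (Fin 3) ℝ}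
    {t : ℝ} (hR : HasDerivAt R R' t) :
    HasDerivAt (fun τ => blkDiag4 (R τ)ᵀ) (blkDiag4 R'ᵀ) t := by
  have := TtCLM.hasFDerivAt.comp_hasDerivAt t hR; exact this

lemma skewMat_transpose (w : Fin 3 → ℝ) : (skewMat w)ᵀ = -skewMat w := by
  ext i j
  fin_cases i <;> fin_cases j <;> simp [skewMat]

/-- The state transition matrix of `ẋ = A(t)x`, with
`A(t) = blkdiag(-[ω]×,…,-[ω]×) + Ā`, is `φ(t,s) = T(t)ᵀ exp(Ā(t-s)) T(s)` where
`T(t) = blkdiag(R(t),…,R(t))` and `Ṙ = R[ω]×`:  it satisfies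
`d/dt φ(t,s) = A(t) φ(t,s)` and `φ(s,s) = I₁₂`. -/
theorem state_transition_matrix
    (R : ℝ → Matrix (Fin 3) (Fin 3) ℝ) (ω : ℝ → (Fin 3 → ℝ))
    (hSO1 : ∀ t, R t * (R t)ᵀ = 1) (hSO2 : ∀ t, (R t)ᵀ * R t = 1)
    (hSO3 : ∀ t, (R t).det = 1)
    (hR : ∀ t, HasDerivAt R (R t * skewMat (ω t)) t)
    (φ : ℝ → ℝ → Matrix (Fin 4 × Fin 3) (Fin 4 × Fin 3) ℝ)
    (hφ : ∀ t s, φ t s =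
      (blkDiag4 (R t))ᵀ * NormedSpace.exp ((t - s) • Abar) * blkDiag4 (R s)) :
    ∀ s : ℝ, (∀ t : ℝ, HasDerivAt (fun τ => φ τ s)
        ((blkDiag4 (-(skewMat (ω t))) + Abar) * φ t s) t) ∧
      φ s s = 1 := by
  intro s
  constructor
  · intro t
    have hexp : ∀ τ : ℝ, (blkDiag4 (R τ))ᵀ * NormedSpace.exp ((τ - s) • Abar) *
        blkDiag4 (R s) = blkDiag4 (R τ)ᵀ *
        (blkDiag4 (R s) + (τ - s) • (Abar * blkDiag4 (R s)) +
          ((τ - s) ^ 2 / 2) • (Abar * Abar * blkDiag4 (R s))) := by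
      intro τ
      rw [exp_smul_Abar, blkDiag4_transpose, mul_assoc]
      congr 1
      rw [add_mul, add_mul, one_mul, smul_mul_assoc, smul_mul_assoc]
    have hfun : (fun τ => φ τ s) = fun τ => blkDiag4 (R τ)ᵀ *
        (blkDiag4 (R s) + (τ - s) • (Abar * blkDiag4 (R s)) +
          ((τ - s) ^ 2 / 2) • (Abar * Abar * blkDiag4 (R s))) := by
      funext τ; rw [hφ, hexp]
    rw [hfun]
    have h1 : HasDerivAt (fun τ : ℝ => τ - s) 1 t := (hasDerivAt_id t).sub_const s
    have h2 : HasDerivAt (fun τ : ℝ => (τ - s) ^ 2 / 2) (t - s) t := by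
      have := (h1.pow 2).div_const 2
      refine this.congr_deriv ?_
      norm_num
    have hg : HasDerivAt (fun τ => blkDiag4 (R s) + (τ - s) • (Abar * blkDiag4 (R s)) +
          ((τ - s) ^ 2 / 2) • (Abar * Abar * blkDiag4 (R s)))
        (Abar * blkDiag4 (R s) + (t - s) • (Abar * Abar * blkDiag4 (R s))) t := by
      have := ((hasDerivAt_const t (blkDiag4 (R s))).add
        (h1.smul_const (Abar * blkDiag4 (R s)))).add
        (h2.smul_const (Abar * Abar * blkDiag4 (R s)))
      simp only [zero_add, one_smul] at this
      exact this
    have hT : HasDerivAt (fun τ => blkDiag4 (R τ)ᵀ)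
        (blkDiag4 ((R t * skewMat (ω t))ᵀ)) t := hasDerivAt_Tt (hR t)
    have hmain := hasDerivAt_matmul hT hg
    convert hmain using 1
    have hφts : φ t s = blkDiag4 (R t)ᵀ *
        (blkDiag4 (R s) + (t - s) • (Abar * blkDiag4 (R s)) +
          ((t - s) ^ 2 / 2) • (Abar * Abar * blkDiag4 (R s))) := by
      rw [hφ, hexp]
    rw [hφts, add_mul]
    congr 1
    · rw [Matrix.transpose_mul, skewMat_transpose, ← blkDiag4_mul, mul_assoc, ← mul_assoc]
    · rw [← mul_assoc, Abar_comm, mul_assoc]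
      congr 1
      rw [mul_add, mul_add, mul_smul_comm, mul_smul_comm, ← mul_assoc, ← mul_assoc,
        Abar_cube, zero_mul, smul_zero, add_zero]
  · rw [hφ, sub_self, zero_smul, NormedSpace.exp_zero, mul_one, blkDiag4_transpose,
      blkDiag4_mul, hSO2, blkDiag4_one]
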